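/- Let (e_0, e_1) be the standard basis of ℂ² and let ψ = ½ Σ_{a,b ∈ {0,1}} e_a ⊗ e_b ⊗ e_b ⊗ e_a, a unit vector in (ℂ²)^{⊗4}. Then the reduced density matrix of |ψ⟩⟨ψ| on the tensor factors (1,2) equals ¼ I₄ and has von Neumann entropy log 4, while the reduced density matrix on the factors (1,4) is the rank-one projection onto the unit vector (1/√2)(e_0 ⊗ e_0 + e_1 ⊗ e_1) and has entropy 0. -/

import Mathlib

open scoped BigOperators ComplexOrder

/-- Von Neumann entropy of a (Hermitian) matrix: `-∑ λᵢ log λᵢ` over the eigenvalues,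
with the convention that it is `0` for non-Hermitian matrices. -/
noncomputable def vNEntropy {n : Type*} [Fintype n] [DecidableEq n] (ρ : Matrix n n ℂ) : ℝ :=
  if h : ρ.IsHermitian then -∑ i, h.eigenvalues i * Real.log (h.eigenvalues i) else 0

/-- A density matrix: positive semidefinite with trace 1. -/
noncomputable def IsDensityMatrix {n : Type*} [Fintype n] [DecidableEq n] (ρ : Matrix n n ℂ) : Prop :=
  ρ.PosSemidef ∧ ρ.trace = 1

/-- The pure density matrix `|ψ⟩⟨ψ|` associated to a vector `ψ`. -/
noncomputable def pureState {n : Type*} (ψ : n → ℂ) : Matrix n n ℂ :=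
  Matrix.of fun p q => ψ p * star (ψ q)

variable {d₁ d₂ d₃ d₄ : ℕ}

/-- Reduced density matrix on factor 1 (partial trace over factors 2,3,4). -/
noncomputable def pt1 (ρ : Matrix (Fin d₁ × Fin d₂ × Fin d₃ × Fin d₄) (Fin d₁ × Fin d₂ × Fin d₃ × Fin d₄) ℂ) :
    Matrix (Fin d₁) (Fin d₁) ℂ :=
  Matrix.of fun i i' =>
    ∑ b : Fin d₂, ∑ c : Fin d₃, ∑ k : Fin d₄, ρ (i, b, c, k) (i', b, c, k)

/-- Reduced density matrix on factor 3 (partial trace over factors 1,2,4). -/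
noncomputable def pt3 (ρ : Matrix (Fin d₁ × Fin d₂ × Fin d₃ × Fin d₄) (Fin d₁ × Fin d₂ × Fin d₃ × Fin d₄) ℂ) :
    Matrix (Fin d₃) (Fin d₃) ℂ :=
  Matrix.of fun c c' =>
    ∑ i : Fin d₁, ∑ b : Fin d₂, ∑ k : Fin d₄, ρ (i, b, c, k) (i, b, c', k)

/-- Reduced density matrix on factor 4 (partial trace over factors 1,2,3). -/
noncomputable def pt4 (ρ : Matrix (Fin d₁ × Fin d₂ × Fin d₃ × Fin d₄) (Fin d₁ × Fin d₂ × Fin d₃ × Fin d₄) ℂ) :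
    Matrix (Fin d₄) (Fin d₄) ℂ :=
  Matrix.of fun k k' =>
    ∑ i : Fin d₁, ∑ b : Fin d₂, ∑ c : Fin d₃, ρ (i, b, c, k) (i, b, c, k')

/-- Reduced density matrix on factors (1,2) (partial trace over factors 3,4). -/
noncomputable def pt12 (ρ : Matrix (Fin d₁ × Fin d₂ × Fin d₃ × Fin d₄) (Fin d₁ × Fin d₂ × Fin d₃ × Fin d₄) ℂ) :
    Matrix (Fin d₁ × Fin d₂) (Fin d₁ × Fin d₂) ℂ :=
  Matrix.of fun p q =>
    ∑ c : Fin d₃, ∑ k : Fin d₄, ρ (p.1, p.2, c, k) (q.1, q.2, c, k)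

/-- Reduced density matrix on factors (1,4) (partial trace over factors 2,3). -/
noncomputable def pt14 (ρ : Matrix (Fin d₁ × Fin d₂ × Fin d₃ × Fin d₄) (Fin d₁ × Fin d₂ × Fin d₃ × Fin d₄) ℂ) :
    Matrix (Fin d₁ × Fin d₄) (Fin d₁ × Fin d₄) ℂ :=
  Matrix.of fun p q =>
    ∑ b : Fin d₂, ∑ c : Fin d₃, ρ (p.1, b, c, p.2) (q.1, b, c, q.2)

/-- Reduced density matrix on factors (3,4) (partial trace over factors 1,2). -/
noncomputable def pt34 (ρ : Matrix (Fin d₁ × Fin d₂ × Fin d₃ × Fin d₄) (Fin d₁ × Fin d₂ × Fin d₃ × Fin d₄) ℂ) :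
    Matrix (Fin d₃ × Fin d₄) (Fin d₃ × Fin d₄) ℂ :=
  Matrix.of fun p q =>
    ∑ i : Fin d₁, ∑ b : Fin d₂, ρ (i, b, p.1, p.2) (i, b, q.1, q.2)

/-- The standard basis vectors of `ℂ²`: `stdBasis a i = δ_{i a}`. -/
noncomputable def stdBasis (a : Fin 2) : Fin 2 → ℂ := fun i => if i = a then 1 else 0

/-- The vector `ψ = ½ ∑_{a,b} e_a ⊗ e_b ⊗ e_b ⊗ e_a` in `(ℂ²)^{⊗4}`. -/
noncomputable def ψDL : Fin 2 × Fin 2 × Fin 2 × Fin 2 → ℂ := fun p =>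
  (1 / 2 : ℂ) * ∑ a : Fin 2, ∑ b : Fin 2,
    stdBasis a p.1 * stdBasis b p.2.1 * stdBasis b p.2.2.1 * stdBasis a p.2.2.2

/-- The maximally entangled unit vector `(1/√2)(e₀ ⊗ e₀ + e₁ ⊗ e₁)` in `ℂ² ⊗ ℂ²`. -/
noncomputable def bellVec : Fin 2 × Fin 2 → ℂ := fun p =>
  (1 / (Real.sqrt 2 : ℝ) : ℂ) * (stdBasis 0 p.1 * stdBasis 0 p.2 + stdBasis 1 p.1 * stdBasis 1 p.2)


-- Auxiliary lemmas

private lemma DL_sqrt2_inv_sq : ((Real.sqrt 2 : ℝ) : ℂ)⁻¹ * ((Real.sqrt 2 : ℝ) : ℂ)⁻¹ = 1 / 2 := by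
  rw [← mul_inv, ← Complex.ofReal_mul, Real.mul_self_sqrt (by norm_num)]
  norm_num

private lemma DL_eig_scalar {m : Type*} [Fintype m] [DecidableEq m] (c : ℝ)
    (h : (((c:ℂ) • (1 : Matrix m m ℂ))).IsHermitian) (i : m) : h.eigenvalues i = c := by
  have hv := h.mulVec_eigenvectorBasis i
  obtain ⟨j, hj⟩ := Function.ne_iff.mp ((WithLp.ofLp_eq_zero 2).ne.2 (h.eigenvectorBasis.orthonormal.ne_zero i))
  have h2 := congrFun hv j
  simp only [Matrix.smul_mulVec, Matrix.one_mulVec, Pi.smul_apply, smul_eq_mul,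
    Complex.real_smul] at h2
  exact_mod_cast (mul_right_cancel₀ hj h2).symm

private lemma DL_eig_idem {m : Type*} [Fintype m] [DecidableEq m] {A : Matrix m m ℂ}
    (hA : A.IsHermitian) (hid : A * A = A) (i : m) :
    hA.eigenvalues i = 0 ∨ hA.eigenvalues i = 1 := by
  set v : m → ℂ := ⇑(hA.eigenvectorBasis i) with hvdef
  have hv := hA.mulVec_eigenvectorBasis i
  obtain ⟨j, hj⟩ := Function.ne_iff.mp ((WithLp.ofLp_eq_zero 2).ne.2 (hA.eigenvectorBasis.orthonormal.ne_zero i))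
  have e1 : A.mulVec (A.mulVec v) = (hA.eigenvalues i * hA.eigenvalues i) • v := by
    rw [← hvdef] at hv
    rw [hv, Matrix.mulVec_smul, hv, smul_smul]
  have e2 : A.mulVec (A.mulVec v) = hA.eigenvalues i • v := by
    rw [← hvdef] at hv
    rw [Matrix.mulVec_mulVec, hid, hv]
  have h3 := congrFun (e1.symm.trans e2) j
  simp only [Pi.smul_apply, Complex.real_smul] at h3
  have h4 : (hA.eigenvalues i * hA.eigenvalues i : ℝ) = hA.eigenvalues i := by
    exact_mod_cast mul_right_cancel₀ hj h3
  rcases mul_eq_zero.mp (by nlinarith : hA.eigenvalues i * (hA.eigenvalues i - 1) = 0) with h | h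
  · exact Or.inl h
  · exact Or.inr (by linarith)

private lemma DL_pt12_eq :
    pt12 (pureState ψDL) = (1 / 4 : ℂ) • (1 : Matrix (Fin 2 × Fin 2) (Fin 2 × Fin 2) ℂ) := by
  ext ⟨i, b⟩ ⟨i', b'⟩
  fin_cases i <;> fin_cases b <;> fin_cases i' <;> fin_cases b' <;>
    simp [pt12, pureState, ψDL, stdBasis, Fin.sum_univ_two, Matrix.one_apply, Prod.ext_iff,
      map_ofNat] <;> norm_num

private lemma DL_pt14_eq : pt14 (pureState ψDL) = pureState bellVec := by
  ext ⟨i, k⟩ ⟨i', k'⟩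
  fin_cases i <;> fin_cases k <;> fin_cases i' <;> fin_cases k' <;>
    simp [pt14, pureState, ψDL, bellVec, stdBasis, Fin.sum_univ_two, map_ofNat,
      Complex.conj_ofReal, DL_sqrt2_inv_sq] <;> norm_num [DL_sqrt2_inv_sq]

private lemma DL_bell_idem : pureState bellVec * pureState bellVec = pureState bellVec := by
  ext p q
  fin_cases p <;> fin_cases q <;>
    simp [pureState, Matrix.mul_apply, Fintype.sum_prod_type, Fin.sum_univ_two, bellVec,
      stdBasis, Complex.conj_ofReal, DL_sqrt2_inv_sq] <;> norm_num

private lemma DL_bell_herm : (pureState bellVec).IsHermitian := by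
  unfold Matrix.IsHermitian
  ext p q
  simp [pureState, Matrix.conjTranspose_apply, mul_comm]

private lemma DL_scalar_herm {m : Type*} [Fintype m] [DecidableEq m] (c : ℝ) :
    (((c:ℂ) • (1 : Matrix m m ℂ))).IsHermitian := by
  unfold Matrix.IsHermitian
  ext p q
  simp only [Matrix.smul_apply, Matrix.conjTranspose_apply, Matrix.one_apply,
    smul_eq_mul, star_mul', star_one, star_zero, Complex.star_def, Complex.conj_ofReal]
  by_cases h : p = q <;> simp [h, eq_comm]

private lemma DL_vN_scalar {m : Type*} [Fintype m] [DecidableEq m] (c : ℝ) :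
    vNEntropy (((c:ℂ) • (1 : Matrix m m ℂ))) = -(Fintype.card m * (c * Real.log c)) := by
  rw [vNEntropy, dif_pos (DL_scalar_herm c)]
  simp [DL_eig_scalar c (DL_scalar_herm c)]

/-- For `ψ = ½ ∑_{a,b} e_a ⊗ e_b ⊗ e_b ⊗ e_a`, a unit vector in `(ℂ²)^{⊗4}`,
the reduced density matrix on factors (1,2) is `¼·I₄`, with entropy `log 4`, while the reduced
density matrix on factors (1,4) is the rank-one projection onto `(1/√2)(e₀⊗e₀ + e₁⊗e₁)`,
with entropy `0`. -/
theorem doplicher_longo_counterexample_maximal :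
    (∑ p, ‖ψDL p‖ ^ 2 = 1) ∧
    pt12 (pureState ψDL) = (1 / 4 : ℂ) • (1 : Matrix (Fin 2 × Fin 2) (Fin 2 × Fin 2) ℂ) ∧
    vNEntropy (pt12 (pureState ψDL)) = Real.log 4 ∧
    pt14 (pureState ψDL) = pureState bellVec ∧
    vNEntropy (pt14 (pureState ψDL)) = 0 := by
  refine ⟨?_, DL_pt12_eq, ?_, DL_pt14_eq, ?_⟩
  · simp [ψDL, stdBasis, Fintype.sum_prod_type, Fin.sum_univ_two]
    norm_num
  · rw [DL_pt12_eq, show (1/4 : ℂ) = (((1/4 : ℝ)):ℂ) by norm_num, DL_vN_scalar]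
    rw [show (1/4 : ℝ) = (4 : ℝ)⁻¹ by norm_num, Real.log_inv]
    norm_num
    ring
  · rw [DL_pt14_eq, vNEntropy, dif_pos DL_bell_herm, neg_eq_zero]
    apply Finset.sum_eq_zero
    intro i _
    rcases DL_eig_idem DL_bell_herm DL_bell_idem i with h | h <;> simp [h]
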